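/- arXiv:2109.02249 — 2 statements merged into one kernel-verified Lean document; each statement's English description precedes it below -/
import Mathlib

section
/- Suppose that for all x in an interval [a, X] one has |θ(x) − x| ≤ (√x/(8π))·log x·(log x − 2), where a ≥ 5000, and set C₀ = |π(a) − li(a) − (θ(a) − a)/log a|. Then for all x in [a, X], |π(x) − li(x)| ≤ (√x/(8π))(log x − 2) + √x/(4π) − √a/(4π) + C₀. -/
open scoped Classical

/-- The logarithmic integral `li(x)` as a principal value. -/
noncomputable def li (x : ℝ) : ℝ :=
  Filter.limUnder (nhdsWithin (0 : ℝ) (Set.Ioi 0)) fun ε =>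
    (∫ t in (0 : ℝ)..(1 - ε), 1 / Real.log t) + ∫ t in (1 + ε : ℝ)..x, 1 / Real.log t

/-- Normalised prime counting function: last term halved when `x` is prime. -/
noncomputable def primePi (x : ℝ) : ℝ :=
  ∑ p ∈ Finset.filter Nat.Prime (Finset.range (⌊x⌋₊ + 1)),
    (if (p : ℝ) = x then (1 : ℝ) / 2 else if (p : ℝ) ≤ x then 1 else 0)

/-- Normalised Chebyshev theta function. -/
noncomputable def chebTheta (x : ℝ) : ℝ :=
  ∑ p ∈ Finset.filter Nat.Prime (Finset.range (⌊x⌋₊ + 1)),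
    (if (p : ℝ) = x then Real.log p / 2 else if (p : ℝ) ≤ x then Real.log p else 0)

/-- Normalised Chebyshev psi function. -/
noncomputable def chebPsi (x : ℝ) : ℝ :=
  ∑ n ∈ Finset.range (⌊x⌋₊ + 1),
    (if (n : ℝ) = x then ArithmeticFunction.vonMangoldt n / 2
     else if (n : ℝ) ≤ x then ArithmeticFunction.vonMangoldt n else 0)

/-- Normalised Riemann prime counting function `Π(x) = Σ*_{p^m ≤ x} 1/m`. -/
noncomputable def riemannPi (x : ℝ) : ℝ :=
  ∑ n ∈ Finset.range (⌊x⌋₊ + 1),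
    (if (n : ℝ) = x then ArithmeticFunction.vonMangoldt n / Real.log n / 2
     else if (n : ℝ) ≤ x then ArithmeticFunction.vonMangoldt n / Real.log n else 0)



section PrimePiLiAux
open Real MeasureTheory intervalIntegral Filter Set Topology

open Real MeasureTheory intervalIntegral Filter Set Topology

noncomputable def il : ℝ → ℝ := fun t => 1 / Real.log t

lemma il_meas : Measurable il := measurable_const.div Real.measurable_log

lemma il_intble_left {u : ℝ} (h0 : 0 < u) (h1 : u < 1) :
    IntervalIntegrable il volume 0 u := by
  rw [intervalIntegrable_iff_integrableOn_Ioc_of_le h0.le]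
  refine Measure.integrableOn_of_bounded (by simp) il_meas.aestronglyMeasurable
    (M := 1 / (-Real.log u)) ?_
  filter_upwards [ae_restrict_mem measurableSet_Ioc] with t ht
  have hlu : Real.log u < 0 := Real.log_neg h0 h1
  have hlt : Real.log t ≤ Real.log u := Real.log_le_log (by exact ht.1) ht.2
  have hltneg : Real.log t < 0 := lt_of_le_of_lt hlt hlu
  rw [Real.norm_eq_abs, il, abs_of_nonpos (div_nonpos_of_nonneg_of_nonpos zero_le_one hltneg.le)]
  rw [← one_div_neg_eq_neg_one_div]
  exact one_div_le_one_div_of_le (by linarith) (by linarith)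

lemma il_contAt {t : ℝ} (h : 1 < t) : ContinuousAt il t := by
  apply ContinuousAt.div continuousAt_const (Real.continuousAt_log (by linarith))
  exact ne_of_gt (Real.log_pos h)

lemma il_intble_gt1 {c d : ℝ} (hc : 1 < c) (hd : 1 < d) :
    IntervalIntegrable il volume c d := by
  apply ContinuousOn.intervalIntegrable
  intro t ht
  exact (il_contAt (lt_of_lt_of_le (lt_min hc hd) ht.1)).continuousWithinAt

noncomputable def gsing : ℝ → ℝ := fun s => 1 / Real.log (1 - s) + 1 / Real.log (1 + s)

lemma gsing_bound {s : ℝ} (hs : s ∈ Set.Icc (0:ℝ) (1/2)) : |gsing s| ≤ 2 := by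
  obtain ⟨hs0, hs2⟩ := hs
  rcases eq_or_lt_of_le hs0 with h | h
  · simp [gsing, ← h]
  set u := Real.log (1 + s) with hu_def
  set v := -Real.log (1 - s) with hv_def
  have h1s : (0:ℝ) < 1 - s := by linarith
  have hu : 0 < u := Real.log_pos (by linarith)
  have hv : 0 < v := by
    have := Real.log_neg h1s (by linarith)
    simp only [hv_def]; linarith
  have hu' : s / (1 + s) ≤ u := by
    have h2 := Real.log_le_sub_one_of_pos (show (0:ℝ) < 1/(1+s) by positivity)
    rw [Real.log_div one_ne_zero (by positivity), Real.log_one] at h2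
    have : 1 / (1 + s) - 1 = -(s/(1+s)) := by field_simp; ring
    rw [this] at h2
    simp only [hu_def]; linarith
  have hv' : s ≤ v := by
    have h2 := Real.log_le_sub_one_of_pos h1s
    simp only [hv_def]; linarith
  have hvu : v - u ≤ s^2 / (1 - s^2) := by
    have hpos : (0:ℝ) < 1 - s^2 := by nlinarith
    have h2 := Real.log_le_sub_one_of_pos (show (0:ℝ) < 1/(1-s^2) by positivity)
    rw [Real.log_div one_ne_zero (by positivity), Real.log_one] at h2
    have hsplit : Real.log (1 - s^2) = Real.log (1-s) + Real.log (1+s) := by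
      rw [← Real.log_mul (by linarith) (by linarith)]
      ring_nf
    have : 1 / (1 - s^2) - 1 = s^2/(1-s^2) := by field_simp; ring
    rw [this, hsplit] at h2
    simp only [hv_def, hu_def]; linarith
  have huv : u ≤ v := by
    have h2 : Real.log ((1-s)*(1+s)) ≤ 0 :=
      Real.log_nonpos (by positivity) (by nlinarith)
    rw [Real.log_mul (by linarith) (by linarith)] at h2
    simp only [hv_def, hu_def]; linarith
  have hg : gsing s = (v - u) / (u * v) := by
    simp only [gsing, hu_def, hv_def]
    have hl1 : Real.log (1 - s) ≠ 0 := by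
      intro h; simp only [hv_def, h] at hv; linarith
    have hl2 : Real.log (1 + s) ≠ 0 := ne_of_gt hu
    field_simp
    ring
  rw [hg, abs_of_nonneg (div_nonneg (by linarith) (by positivity))]
  rw [div_le_iff₀ (by positivity)]
  have key : s^2 / (1 - s^2) ≤ (2*s^2) / (1+s) := by
    rw [div_le_div_iff₀ (by nlinarith) (by linarith)]
    nlinarith [mul_nonneg (mul_nonneg (sq_nonneg s) (show (0:ℝ) ≤ 1-2*s by linarith))
      (show (0:ℝ) ≤ 1+s by linarith)]
  have keq : (2*s^2) / (1+s) = 2 * (s^2/(1+s)) := by ring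
  have key2 : s^2 / (1+s) ≤ u * v := by
    have : s / (1+s) * s ≤ u * v :=
      mul_le_mul hu' hv' h.le hu.le
    calc s^2/(1+s) = s/(1+s) * s := by ring
    _ ≤ u * v := this
  calc v - u ≤ s^2/(1-s^2) := hvu
    _ ≤ 2*s^2/(1+s) := key
    _ = 2*(s^2/(1+s)) := keq
    _ ≤ 2*(u*v) := by linarith

lemma il_def : (fun t => 1 / Real.log t) = il := rfl

lemma gsing_meas : Measurable gsing := by
  apply Measurable.add
  · exact measurable_const.div (Real.measurable_log.comp (measurable_const.sub measurable_id))
  · exact measurable_const.div (Real.measurable_log.comp (measurable_const.add measurable_id))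

lemma gsing_integrableOn : IntegrableOn gsing (Set.Icc (0:ℝ) (1/2)) := by
  refine Measure.integrableOn_of_bounded (by simp) gsing_meas.aestronglyMeasurable (M := 2) ?_
  filter_upwards [ae_restrict_mem measurableSet_Icc] with s hs
  rw [Real.norm_eq_abs]; exact gsing_bound hs

lemma il_contAt' {t : ℝ} (h0 : t ≠ 0) (h1 : Real.log t ≠ 0) : ContinuousAt il t :=
  ContinuousAt.div continuousAt_const (Real.continuousAt_log h0) h1

lemma F_eq {b ε : ℝ} (hb : 2 ≤ b) (hε0 : 0 < ε) (hε2 : ε ≤ 1/2) :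
    (∫ t in (0:ℝ)..(1-ε), 1/Real.log t) + ∫ t in (1+ε:ℝ)..b, 1/Real.log t
      = ((∫ t in (0:ℝ)..(1/2:ℝ), il t) + ∫ t in (3/2:ℝ)..b, il t)
        + ∫ s in ε..(1/2:ℝ), gsing s := by
  rw [il_def]
  have h1e : (1:ℝ)/2 ≤ 1 - ε := by linarith
  have hA1 : IntervalIntegrable il volume 0 (1/2) := il_intble_left (by norm_num) (by norm_num)
  have hAfull : IntervalIntegrable il volume 0 (1-ε) :=
    il_intble_left (by linarith) (by linarith)
  have hA2 : IntervalIntegrable il volume (1/2) (1-ε) := by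
    apply hAfull.mono_set
    rw [uIcc_of_le h1e, uIcc_of_le (by linarith : (0:ℝ) ≤ 1-ε)]
    exact Icc_subset_Icc (by norm_num) le_rfl
  have hA : ∫ t in (0:ℝ)..(1-ε), il t
      = (∫ t in (0:ℝ)..(1/2:ℝ), il t) + ∫ t in (1/2:ℝ)..(1-ε), il t :=
    (integral_add_adjacent_intervals hA1 hA2).symm
  have hB1 : IntervalIntegrable il volume (1+ε) (3/2) := il_intble_gt1 (by linarith) (by norm_num)
  have hB2 : IntervalIntegrable il volume (3/2) b := il_intble_gt1 (by norm_num) (by linarith)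
  have hB : ∫ t in (1+ε:ℝ)..b, il t
      = (∫ t in (1+ε:ℝ)..(3/2:ℝ), il t) + ∫ t in (3/2:ℝ)..b, il t :=
    (integral_add_adjacent_intervals hB1 hB2).symm
  have hC1 : IntervalIntegrable (fun s => il (1 - s)) volume ε (1/2) := by
    apply ContinuousOn.intervalIntegrable
    intro s hs
    rw [uIcc_of_le hε2] at hs
    have h1 : 0 < 1 - s := by linarith [hs.2]
    have h2 : 1 - s < 1 := by linarith [hs.1]
    exact ((il_contAt' (ne_of_gt h1) (ne_of_lt (Real.log_neg h1 h2))).comp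
      ((continuous_const.sub continuous_id).continuousAt)).continuousWithinAt
  have hC2 : IntervalIntegrable (fun s => il (1 + s)) volume ε (1/2) := by
    apply ContinuousOn.intervalIntegrable
    intro s hs
    rw [uIcc_of_le hε2] at hs
    have h1 : 1 < 1 + s := by linarith [hs.1]
    exact ((il_contAt h1).comp
      ((continuous_const.add continuous_id).continuousAt)).continuousWithinAt
  have hC : ∫ s in ε..(1/2:ℝ), gsing s
      = (∫ s in ε..(1/2:ℝ), il (1 - s)) + ∫ s in ε..(1/2:ℝ), il (1 + s) :=
    integral_add hC1 hC2
  have hD : (∫ s in ε..(1/2:ℝ), il (1 - s)) = ∫ t in (1/2:ℝ)..(1-ε), il t := by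
    have h := integral_comp_sub_left (a := ε) (b := (1/2:ℝ)) il 1
    norm_num at h ⊢
  have hE : (∫ s in ε..(1/2:ℝ), il (1 + s)) = ∫ t in (1+ε:ℝ)..(3/2:ℝ), il t := by
    have h := integral_comp_add_left (a := ε) (b := (1/2:ℝ)) il 1
    norm_num at h ⊢
  rw [hA, hB, hC, hD, hE]; ring


lemma li_lim {b : ℝ} (hb : 2 ≤ b) :
    Tendsto (fun ε => (∫ t in (0:ℝ)..(1-ε), 1/Real.log t) + ∫ t in (1+ε:ℝ)..b, 1/Real.log t)
      (𝓝[>](0:ℝ))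
      (𝓝 (((∫ t in (0:ℝ)..(1/2:ℝ), il t) + ∫ t in (3/2:ℝ)..b, il t)
        + ∫ s in (0:ℝ)..(1/2:ℝ), gsing s)) := by
  have hprim : Tendsto (fun x => ∫ s in x..(1/2:ℝ), gsing s) (𝓝[>](0:ℝ))
      (𝓝 (∫ s in (0:ℝ)..(1/2:ℝ), gsing s)) := by
    have hc : ContinuousOn (fun x => ∫ s in x..(1/2:ℝ), gsing s) (Set.Icc (0:ℝ) (1/2)) := by
      have h := continuousOn_primitive_interval_left
        (f := gsing) (μ := volume) (a := (0:ℝ)) (b := (1/2:ℝ))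
        (by rw [uIcc_of_le (by norm_num)]; exact gsing_integrableOn)
      rwa [uIcc_of_le (by norm_num : (0:ℝ) ≤ 1/2)] at h
    have h0 := (hc 0 ⟨le_rfl, by norm_num⟩).mono_left
      (nhdsWithin_mono _ Ioc_subset_Icc_self)
    rwa [nhdsWithin_Ioc_eq_nhdsGT (by norm_num : (0:ℝ) < 1/2)] at h0
  apply Tendsto.congr' _ (tendsto_const_nhds.add hprim)
  filter_upwards [Ioc_mem_nhdsGT_of_mem (Set.mem_Ico.2 ⟨le_rfl, show (0:ℝ) < 1/2 by norm_num⟩)] with ε hε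
  exact (F_eq hb hε.1 hε.2).symm

lemma li_eq {b : ℝ} (hb : 2 ≤ b) :
    li b = ((∫ t in (0:ℝ)..(1/2:ℝ), il t) + ∫ t in (3/2:ℝ)..b, il t)
        + ∫ s in (0:ℝ)..(1/2:ℝ), gsing s :=
  (li_lim hb).limUnder_eq

lemma li_sub {b c : ℝ} (hb : 2 ≤ b) (hc : 2 ≤ c) :
    li c = li b + ∫ t in b..c, il t := by
  rw [li_eq hb, li_eq hc]
  have h1 : IntervalIntegrable il volume (3/2) b := il_intble_gt1 (by norm_num) (by linarith)
  have h2 : IntervalIntegrable il volume b c := il_intble_gt1 (by linarith) (by linarith)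
  have h := integral_add_adjacent_intervals h1 h2
  linarith

open Real MeasureTheory intervalIntegral Filter Set Topology


noncomputable def pn (n : ℕ) : ℝ := ∑ p ∈ Finset.filter Nat.Prime (Finset.range (n+1)), 1

noncomputable def tn (n : ℕ) : ℝ :=
  ∑ p ∈ Finset.filter Nat.Prime (Finset.range (n+1)), Real.log p

lemma pn_succ (n : ℕ) : pn (n+1) = pn n + (if Nat.Prime (n+1) then 1 else 0) := by
  unfold pn
  rw [Finset.range_add_one, Finset.filter_insert]
  by_cases h : Nat.Prime (n+1)
  · rw [if_pos h, if_pos h, Finset.sum_insert (by simp), add_comm]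
  · rw [if_neg h, if_neg h, add_zero]

lemma tn_succ (n : ℕ) : tn (n+1) = tn n + (if Nat.Prime (n+1) then Real.log (n+1) else 0) := by
  unfold tn
  rw [Finset.range_add_one, Finset.filter_insert]
  by_cases h : Nat.Prime (n+1)
  · rw [if_pos h, if_pos h, Finset.sum_insert (by simp), add_comm]
    norm_num
  · rw [if_neg h, if_neg h, add_zero]

lemma tn_mono : Monotone tn := by
  apply monotone_nat_of_le_succ
  intro n
  rw [tn_succ]
  have : (0:ℝ) ≤ if Nat.Prime (n+1) then Real.log (n+1) else 0 := by
    split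
    · exact Real.log_nonneg (by exact_mod_cast Nat.le_add_left 1 n)
    · exact le_refl 0
  linarith

lemma pi_theta_eq (x : ℝ) (hx : 2 ≤ x) :
    primePi x - chebTheta x / Real.log x = pn ⌊x⌋₊ - tn ⌊x⌋₊ / Real.log x := by
  have hlog : Real.log x ≠ 0 := ne_of_gt (Real.log_pos (by linarith))
  unfold primePi chebTheta pn tn
  rw [Finset.sum_div, ← Finset.sum_sub_distrib, Finset.sum_div, ← Finset.sum_sub_distrib]
  apply Finset.sum_congr rfl
  intro p hp
  simp only [Finset.mem_filter, Finset.mem_range] at hp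
  have hple : (p:ℝ) ≤ x := by
    have h1 : (p:ℝ) ≤ (⌊x⌋₊ : ℝ) := by exact_mod_cast Nat.lt_succ_iff.1 hp.1
    exact le_trans h1 (Nat.floor_le (by linarith))
  by_cases h : (p:ℝ) = x
  · rw [if_pos h, if_pos h, show Real.log (p:ℝ) = Real.log x from by rw [h]]
    field_simp
    ring
  · rw [if_neg h, if_neg h, if_pos hple, if_pos hple]

lemma cheb_eq_tn (x : ℝ) (hx : 0 ≤ x) (h : ∀ n : ℕ, (n:ℝ) ≠ x) : chebTheta x = tn ⌊x⌋₊ := by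
  unfold chebTheta tn
  apply Finset.sum_congr rfl
  intro p hp
  simp only [Finset.mem_filter, Finset.mem_range] at hp
  have hple : (p:ℝ) ≤ x := by
    have h1 : (p:ℝ) ≤ (⌊x⌋₊ : ℝ) := by exact_mod_cast Nat.lt_succ_iff.1 hp.1
    exact le_trans h1 (Nat.floor_le hx)
  rw [if_neg (h p), if_pos hple]

lemma floor_eq_on (x t : ℝ) (hx : 0 ≤ x) (h1 : x ≤ t) (h2 : t < (⌊x⌋₊ : ℝ) + 1) :
    ⌊t⌋₊ = ⌊x⌋₊ := by
  rw [Nat.floor_eq_iff (le_trans hx h1)]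
  exact ⟨le_trans (Nat.floor_le hx) h1, by exact_mod_cast h2⟩

noncomputable def psi0 (x : ℝ) : ℝ := pn ⌊x⌋₊ - tn ⌊x⌋₊ / Real.log x

lemma psi0_right_eventuallyEq {x : ℝ} (hx : 2 ≤ x) :
    psi0 =ᶠ[𝓝[Set.Ici x] x] (fun t => pn ⌊x⌋₊ - tn ⌊x⌋₊ / Real.log t) := by
  have hlt : x < (⌊x⌋₊ : ℝ) + 1 := Nat.lt_floor_add_one x
  filter_upwards [(eventually_lt_nhds hlt).filter_mono nhdsWithin_le_nhds,
    self_mem_nhdsWithin] with t h1 h2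
  unfold psi0
  rw [floor_eq_on x t (by linarith) h2 h1]

lemma psi0_contWithinAt_right {x : ℝ} (hx : 2 ≤ x) :
    ContinuousWithinAt psi0 (Set.Ici x) x := by
  have hlog : Real.log x ≠ 0 := ne_of_gt (Real.log_pos (by linarith))
  have hg : ContinuousWithinAt (fun t => pn ⌊x⌋₊ - tn ⌊x⌋₊ / Real.log t) (Set.Ici x) x :=
    (continuousAt_const.sub ((continuousAt_const.div
      (Real.continuousAt_log (by linarith)) hlog))).continuousWithinAt
  exact hg.congr_of_eventuallyEq (psi0_right_eventuallyEq hx) rfl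

lemma psi0_hasDerivWithinAt {x : ℝ} (hx : 2 ≤ x) :
    HasDerivWithinAt psi0 (tn ⌊x⌋₊ * (1/x) / (Real.log x)^2) (Set.Ici x) x := by
  have hlog : Real.log x ≠ 0 := ne_of_gt (Real.log_pos (by linarith))
  have hg : HasDerivAt (fun t => pn ⌊x⌋₊ - tn ⌊x⌋₊ / Real.log t)
      (tn ⌊x⌋₊ * (1/x) / (Real.log x)^2) x := by
    have h1 : HasDerivAt Real.log (1/x) x := by
      simpa using Real.hasDerivAt_log (by linarith : x ≠ 0)
    have h2 : HasDerivAt (fun t => tn ⌊x⌋₊ / Real.log t)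
        (-(tn ⌊x⌋₊ * (1/x) / (Real.log x)^2)) x := by
      have h3 := (h1.inv hlog).const_mul (tn ⌊x⌋₊)
      simp only [div_eq_mul_inv]
      exact h3.congr_deriv (by ring)
    exact ((hasDerivAt_const x (pn ⌊x⌋₊)).sub h2).congr_deriv (by ring)
  exact (hg.hasDerivWithinAt).congr_of_eventuallyEq (psi0_right_eventuallyEq hx) rfl

lemma psi0_contWithinAt_left {x : ℝ} (hx : 2 ≤ x) :
    ContinuousWithinAt psi0 (Set.Iic x) x := by
  have hlog : Real.log x ≠ 0 := ne_of_gt (Real.log_pos (by linarith))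
  have hx0 : (0:ℝ) ≤ x := by linarith
  rcases eq_or_lt_of_le (Nat.floor_le hx0) with hfx | hfx
  · -- x is a natural number, x = ⌊x⌋₊
    set m := ⌊x⌋₊ with hm
    have hm2 : 2 ≤ m := by
      have := Nat.le_floor (by exact_mod_cast hx : ((2:ℕ):ℝ) ≤ x)
      exact this
    have hm1 : 1 ≤ m := le_trans (by norm_num) hm2
    have hmeq : m = (m - 1) + 1 := (Nat.succ_pred_eq_of_pos hm1).symm
    have hcast : ((m - 1 : ℕ) : ℝ) = (m : ℝ) - 1 := by
      push_cast [Nat.cast_sub hm1]; ring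
    have hkey : ∀ t ∈ Set.Ioc ((m:ℝ) - 1) x,
        psi0 t = pn (m-1) - tn (m-1) / Real.log t := by
      intro t ht
      rcases eq_or_lt_of_le ht.2 with h | h
      · subst h
        unfold psi0
        rw [← hm, hmeq, pn_succ, tn_succ, ← hmeq]
        have hteq : ((m-1:ℕ):ℝ) + 1 = t := by rw [hcast, ← hfx]; ring
        rw [hteq]
        by_cases hp : Nat.Prime m
        · rw [if_pos hp, if_pos hp]
          field_simp
          ring
        · rw [if_neg hp, if_neg hp]; ring_nf
      · have hft : ⌊t⌋₊ = m - 1 := by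
          rw [Nat.floor_eq_iff (by nlinarith [ht.1, hcast] : (0:ℝ) ≤ t)]
          constructor
          · rw [hcast]; linarith [ht.1]
          · rw [hcast]; rw [← hfx] at h; linarith
        unfold psi0; rw [hft]
    have hg : ContinuousWithinAt (fun t => pn (m-1) - tn (m-1) / Real.log t) (Set.Iic x) x :=
      (continuousAt_const.sub ((continuousAt_const.div
        (Real.continuousAt_log (by linarith)) hlog))).continuousWithinAt
    apply hg.congr_of_eventuallyEq
    · filter_upwards [(eventually_gt_nhds (by linarith : (m:ℝ) - 1 < x)).filter_mono
        nhdsWithin_le_nhds, self_mem_nhdsWithin] with t h1 h2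
      exact hkey t ⟨h1, h2⟩
    · exact hkey x ⟨by linarith, le_rfl⟩
  · -- ⌊x⌋₊ < x : locally constant floor
    have hg : ContinuousWithinAt (fun t => pn ⌊x⌋₊ - tn ⌊x⌋₊ / Real.log t) (Set.Iic x) x :=
      (continuousAt_const.sub ((continuousAt_const.div
        (Real.continuousAt_log (by linarith)) hlog))).continuousWithinAt
    apply hg.congr_of_eventuallyEq
    · filter_upwards [(eventually_gt_nhds hfx).filter_mono nhdsWithin_le_nhds,
        self_mem_nhdsWithin] with t h1 h2
      unfold psi0
      rw [show ⌊t⌋₊ = ⌊x⌋₊ from ?_]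
      rw [Nat.floor_eq_iff (by linarith : (0:ℝ) ≤ t)]
      exact ⟨h1.le, lt_of_le_of_lt h2 (Nat.lt_floor_add_one x)⟩
    · rfl

lemma psi0_contAt {x : ℝ} (hx : 2 ≤ x) : ContinuousAt psi0 x :=
  continuousAt_iff_continuous_left_right.2
    ⟨psi0_contWithinAt_left hx, psi0_contWithinAt_right hx⟩

lemma tn_nonneg (n : ℕ) : 0 ≤ tn n := by
  apply Finset.sum_nonneg
  intro p hp
  simp only [Finset.mem_filter] at hp
  exact Real.log_nonneg (by exact_mod_cast hp.2.one_lt.le)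

noncomputable def h0 (x : ℝ) : ℝ := (tn ⌊x⌋₊ - x) / (x * (Real.log x)^2)

lemma h0_meas : Measurable h0 := by
  have h1 : Measurable (fun x : ℝ => tn ⌊x⌋₊) := Measurable.comp (f := Nat.floor) (g := tn) measurable_from_top Nat.measurable_floor
  exact (h1.sub measurable_id).div (measurable_id.mul (Real.measurable_log.pow_const 2))

lemma h0_intble {a x : ℝ} (ha : 2 ≤ a) (hax : a ≤ x) :
    IntervalIntegrable h0 volume a x := by
  rw [intervalIntegrable_iff_integrableOn_Ioc_of_le hax]
  have hla : 0 < Real.log a := Real.log_pos (by linarith)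
  refine Measure.integrableOn_of_bounded (by simp) h0_meas.aestronglyMeasurable
    (M := (tn ⌊x⌋₊ + x) / (a * (Real.log a)^2)) ?_
  filter_upwards [ae_restrict_mem measurableSet_Ioc] with t ht
  have ht2 : 2 ≤ t := le_trans ha ht.1.le
  have hlt : 0 < Real.log t := Real.log_pos (by linarith)
  have hden : 0 < t * (Real.log t)^2 := by positivity
  rw [Real.norm_eq_abs, h0, abs_div, abs_of_pos hden]
  apply div_le_div₀ (by linarith [tn_nonneg ⌊x⌋₊] : (0:ℝ) ≤ tn ⌊x⌋₊ + x)
  · apply le_trans (abs_sub _ _)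
    have h1 : tn ⌊t⌋₊ ≤ tn ⌊x⌋₊ := tn_mono (Nat.floor_le_floor ht.2)
    rw [abs_of_nonneg (tn_nonneg _), abs_of_nonneg (by linarith : (0:ℝ) ≤ t)]
    linarith [ht.2]
  · positivity
  · have h1 : Real.log a ≤ Real.log t := Real.log_le_log (by linarith) ht.1.le
    have h2 : (Real.log a)^2 ≤ (Real.log t)^2 := by nlinarith
    have h3 : a * (Real.log a)^2 ≤ t * (Real.log a)^2 :=
      mul_le_mul_of_nonneg_right ht.1.le (sq_nonneg _)
    nlinarith

lemma h0_right_eventuallyEq {x : ℝ} (hx : 2 ≤ x) :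
    h0 =ᶠ[𝓝[Set.Ici x] x] (fun t => (tn ⌊x⌋₊ - t) / (t * (Real.log t)^2)) := by
  have hlt : x < (⌊x⌋₊ : ℝ) + 1 := Nat.lt_floor_add_one x
  filter_upwards [(eventually_lt_nhds hlt).filter_mono nhdsWithin_le_nhds,
    self_mem_nhdsWithin] with t h1 h2
  unfold h0
  rw [floor_eq_on x t (by linarith) h2 h1]

lemma h0_contWithinAt {x : ℝ} (hx : 2 ≤ x) : ContinuousWithinAt h0 (Set.Ici x) x := by
  have hlog : Real.log x ≠ 0 := ne_of_gt (Real.log_pos (by linarith))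
  have hg : ContinuousWithinAt (fun t => (tn ⌊x⌋₊ - t) / (t * (Real.log t)^2))
      (Set.Ici x) x := by
    apply ContinuousWithinAt.div
    · exact (continuousAt_const.sub continuousAt_id).continuousWithinAt
    · exact (continuousAt_id.mul ((Real.continuousAt_log (by linarith)).pow 2)).continuousWithinAt
    · positivity
  exact hg.congr_of_eventuallyEq (h0_right_eventuallyEq hx) rfl

lemma h0_prim_hasDeriv {a x : ℝ} (ha : 2 ≤ a) (hax : a ≤ x) :
    HasDerivWithinAt (fun u => ∫ s in a..u, h0 s) (h0 x) (Set.Ici x) x :=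
  intervalIntegral.integral_hasDerivWithinAt_right (t := Set.Ioi x) (h0_intble ha hax)
    (h0_meas.stronglyMeasurable.stronglyMeasurableAtFilter)
    ((h0_contWithinAt (le_trans ha hax)).mono Set.Ioi_subset_Ici_self)

lemma log_gt_two {t : ℝ} (ht : 5000 ≤ t) : 2 < Real.log t := by
  have h1 : Real.exp 1 < 2.7182818286 := Real.exp_one_lt_d9
  have h2 : Real.exp 2 = Real.exp 1 * Real.exp 1 := by rw [← Real.exp_add]; norm_num
  have h3 : Real.exp 2 < 5000 := by nlinarith [Real.exp_pos 1]
  exact (Real.lt_log_iff_exp_lt (by linarith)).2 (by linarith)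

lemma key_ineq {st L p : ℝ} (hst : 0 < st) (hL : 2 < L) (hp : 0 < p) :
    st / (8*p) * L * (L-2) / (st^2 * L^2) ≤ 1 / (2*st) / (4*p) := by
  rw [div_le_div_iff₀ (by positivity) (by positivity)]
  have h : 0 < p * st^2 * L := by positivity
  field_simp
  nlinarith [h]


/-- If `|θ(t) − t| ≤ (√t/(8π)) log t (log t − 2)` on `[a, X]` with `a ≥ 5000`, then on
`[a, X]`, `|π(x) − li(x)| ≤ (√x/(8π))(log x − 2) + √x/(4π) − √a/(4π) + C₀`, where
`C₀ = |π(a) − li(a) − (θ(a) − a)/log a|`. -/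
theorem primePi_sub_li_bound (a X : ℝ) (ha : 5000 ≤ a)
    (hθ : ∀ t ∈ Set.Icc a X,
      |chebTheta t - t| ≤ Real.sqrt t / (8 * Real.pi) * Real.log t * (Real.log t - 2)) :
    ∀ x ∈ Set.Icc a X,
      |primePi x - li x| ≤
        Real.sqrt x / (8 * Real.pi) * (Real.log x - 2) + Real.sqrt x / (4 * Real.pi) -
          Real.sqrt a / (4 * Real.pi) +
          |primePi a - li a - (chebTheta a - a) / Real.log a| := by
  intro x hx
  obtain ⟨hax, hxX⟩ := hx
  have haX : a ≤ X := le_trans hax hxX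
  have ha2 : (2:ℝ) ≤ a := by linarith
  have hx5000 : 5000 ≤ x := le_trans ha hax
  have hx2 : (2:ℝ) ≤ x := by linarith
  have hla2 : 2 < Real.log a := log_gt_two ha
  have hlx2 : 2 < Real.log x := log_gt_two hx5000
  have hlane : Real.log a ≠ 0 := ne_of_gt (by linarith)
  have hlxne : Real.log x ≠ 0 := ne_of_gt (by linarith)
  have hpi : 0 < Real.pi := Real.pi_pos
  -- G is constant on [a, X]
  have hcont : ContinuousOn (fun u => psi0 u - li u + u / Real.log u - ∫ s in a..u, h0 s)
      (Set.Icc a X) := by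
    apply ContinuousOn.sub
    apply ContinuousOn.add
    apply ContinuousOn.sub
    · intro u hu
      exact (psi0_contAt (le_trans ha2 hu.1)).continuousWithinAt
    · have hil : IntervalIntegrable il volume a X := il_intble_gt1 (by linarith) (by linarith)
      have hcp := continuousOn_primitive_interval' hil Set.left_mem_uIcc
      rw [Set.uIcc_of_le haX] at hcp
      apply ContinuousOn.congr (continuousOn_const.add hcp)
      intro u hu
      exact li_sub ha2 (le_trans ha2 hu.1)
    · intro u hu
      have h1u : (1:ℝ) < u := by linarith [hu.1]
      exact (continuousAt_id.div (Real.continuousAt_log (by linarith))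
        (ne_of_gt (Real.log_pos h1u))).continuousWithinAt
    · have hcp := continuousOn_primitive_interval' (h0_intble ha2 haX) Set.left_mem_uIcc
      rwa [Set.uIcc_of_le haX] at hcp
  have hderiv : ∀ u ∈ Set.Ico a X, HasDerivWithinAt
      (fun u => psi0 u - li u + u / Real.log u - ∫ s in a..u, h0 s) 0 (Set.Ici u) u := by
    intro u hu
    have hu5000 : 5000 ≤ u := le_trans ha hu.1
    have hu2 : (2:ℝ) ≤ u := by linarith
    have hu0 : (0:ℝ) < u := by linarith
    have hlu2 : 2 < Real.log u := log_gt_two hu5000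
    have hlune : Real.log u ≠ 0 := ne_of_gt (by linarith)
    have d1 := psi0_hasDerivWithinAt hu2
    have d2 : HasDerivWithinAt li (il u) (Set.Ici u) u := by
      have hprim : HasDerivAt (fun v => li a + ∫ t in a..v, il t) (il u) u :=
        (intervalIntegral.integral_hasDerivAt_right (il_intble_gt1 (by linarith) (by linarith))
          il_meas.stronglyMeasurable.stronglyMeasurableAtFilter
          (il_contAt (by linarith))).const_add (li a)
      apply hprim.hasDerivWithinAt.congr_of_eventuallyEq
      · filter_upwards [self_mem_nhdsWithin] with v hv
        exact li_sub ha2 (le_trans hu2 hv)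
      · exact li_sub ha2 hu2
    have d3 : HasDerivAt (fun v => v / Real.log v)
        ((1 * Real.log u - u * u⁻¹) / (Real.log u)^2) u :=
      (hasDerivAt_id u).div (Real.hasDerivAt_log (ne_of_gt hu0)) hlune
    have d4 := h0_prim_hasDeriv ha2 hu.1
    have dG := ((d1.sub d2).add d3.hasDerivWithinAt).sub d4
    have hval : tn ⌊u⌋₊ * (1/u) / (Real.log u)^2 - il u
        + (1 * Real.log u - u * u⁻¹) / (Real.log u)^2 - h0 u = 0 := by
      unfold il h0
      field_simp
      ring
    rw [hval] at dG
    exact dG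
  have hconst := constant_of_has_deriv_right_zero hcont hderiv x ⟨hax, hxX⟩
  simp only [intervalIntegral.integral_same] at hconst
  have hpix := pi_theta_eq x hx2
  have hpia := pi_theta_eq a ha2
  have hIdent : primePi x - li x = (primePi a - li a - (chebTheta a - a)/Real.log a)
      + (chebTheta x - x)/Real.log x + ∫ s in a..x, h0 s := by
    have e1 : (chebTheta x - x)/Real.log x = chebTheta x/Real.log x - x/Real.log x :=
      sub_div _ _ _
    have e2 : (chebTheta a - a)/Real.log a = chebTheta a/Real.log a - a/Real.log a :=
      sub_div _ _ _
    unfold psi0 at hconst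
    linarith [hconst, hpix, hpia, e1, e2]
  have hEx : |(chebTheta x - x)/Real.log x| ≤ Real.sqrt x / (8*Real.pi) * (Real.log x - 2) := by
    rw [abs_div, abs_of_pos (by linarith : (0:ℝ) < Real.log x)]
    have h2 : |chebTheta x - x| / Real.log x
        ≤ (Real.sqrt x/(8*Real.pi) * Real.log x * (Real.log x - 2)) / Real.log x :=
      (div_le_div_iff_of_pos_right (by linarith)).2 (hθ x ⟨hax, hxX⟩)
    have e3 : (Real.sqrt x/(8*Real.pi) * Real.log x * (Real.log x - 2)) / Real.log x
        = Real.sqrt x / (8*Real.pi) * (Real.log x - 2) := by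
      field_simp
    linarith [h2, e3.le, e3.ge]
  have hIb : |∫ s in a..x, h0 s| ≤ Real.sqrt x/(4*Real.pi) - Real.sqrt a/(4*Real.pi) := by
    have hbnd : ∀ᵐ t ∂(volume.restrict (Set.uIoc a x)),
        ‖h0 t‖ ≤ 1/(2*Real.sqrt t)/(4*Real.pi) := by
      have hae : ∀ᵐ t : ℝ, t ∉ Set.range ((↑) : ℕ → ℝ) := by
        have hcnt : volume (Set.range ((↑) : ℕ → ℝ)) = 0 :=
          (Set.countable_range _).measure_zero _
        rw [ae_iff]
        simp only [not_not]; exact hcnt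
      rw [Set.uIoc_of_le hax]
      filter_upwards [ae_restrict_mem measurableSet_Ioc, ae_restrict_of_ae hae] with t ht htn
      have ht5000 : 5000 ≤ t := le_trans ha ht.1.le
      have hlt2 : 2 < Real.log t := log_gt_two ht5000
      have ht0 : (0:ℝ) < t := by linarith
      have hcheb : chebTheta t = tn ⌊t⌋₊ :=
        cheb_eq_tn t (by linarith) (fun n heq => htn ⟨n, heq⟩)
      have hθt := hθ t ⟨ht.1.le, le_trans ht.2 hxX⟩
      have hden : (0:ℝ) < t * (Real.log t)^2 := by positivity
      have hst : Real.sqrt t ^ 2 = t := Real.sq_sqrt ht0.le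
      have hst0 : 0 < Real.sqrt t := Real.sqrt_pos.2 ht0
      rw [Real.norm_eq_abs,
        show h0 t = (chebTheta t - t)/(t*(Real.log t)^2) from by unfold h0; rw [hcheb],
        abs_div, abs_of_pos hden]
      calc |chebTheta t - t| / (t*(Real.log t)^2)
          ≤ (Real.sqrt t/(8*Real.pi) * Real.log t * (Real.log t - 2)) / (t*(Real.log t)^2) :=
            (div_le_div_iff_of_pos_right hden).2 hθt
        _ = Real.sqrt t/(8*Real.pi) * Real.log t * (Real.log t - 2)
            / (Real.sqrt t^2 * (Real.log t)^2) := by rw [hst]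
        _ ≤ 1/(2*Real.sqrt t)/(4*Real.pi) := key_ineq hst0 hlt2 hpi
    have hintb : IntervalIntegrable (fun t => 1/(2*Real.sqrt t)/(4*Real.pi)) volume a x := by
      apply ContinuousOn.intervalIntegrable
      intro t ht
      rw [Set.uIcc_of_le hax] at ht
      have ht0 : (0:ℝ) < t := by linarith [ht.1]
      exact ((continuousAt_const.div
        ((continuous_const.mul Real.continuous_sqrt).continuousAt)
        (mul_pos two_pos (Real.sqrt_pos.2 ht0)).ne').div_const (4*Real.pi)).continuousWithinAt
    have hnorm := intervalIntegral.norm_integral_le_of_norm_le hax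
      (by rw [Set.uIoc_of_le hax] at hbnd; exact (ae_restrict_iff' measurableSet_Ioc).1 hbnd) hintb
    have hfund : (∫ t in a..x, 1/(2*Real.sqrt t)/(4*Real.pi))
        = Real.sqrt x/(4*Real.pi) - Real.sqrt a/(4*Real.pi) := by
      have heq : ∀ t ∈ Set.uIcc a x, HasDerivAt (fun v => Real.sqrt v / (4*Real.pi))
          (1/(2*Real.sqrt t)/(4*Real.pi)) t := by
        intro t ht
        rw [Set.uIcc_of_le hax] at ht
        exact (Real.hasDerivAt_sqrt (by intro h; rw [h] at ht; linarith [ht.1])).div_const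
          (4*Real.pi)
      exact intervalIntegral.integral_eq_sub_of_hasDerivAt heq hintb
    have hg0 : (0:ℝ) ≤ Real.sqrt x/(4*Real.pi) - Real.sqrt a/(4*Real.pi) := by
      have h4 : (0:ℝ) < 4*Real.pi := by positivity
      have := (div_le_div_iff_of_pos_right h4).2 (Real.sqrt_le_sqrt hax)
      linarith
    rw [Real.norm_eq_abs, hfund] at hnorm
    exact hnorm
  have htri : |primePi x - li x| ≤ |primePi a - li a - (chebTheta a - a)/Real.log a|
      + |(chebTheta x - x)/Real.log x| + |∫ s in a..x, h0 s| := by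
    rw [hIdent]
    exact (abs_add_le _ _).trans (add_le_add (abs_add_le _ _) le_rfl)
  linarith [htri, hEx, hIb]

end PrimePiLiAux
end

section
/- Let a > 0 and suppose |π(y) − li(y)| < a·√y·log y for all y in [e^{z−1}, e^z], where z > 1. If (e^{z+1}/z)·li(e^{z−1}) − (a(z−1)/z)·e^{(3z+1)/2} − (li(e^z) + a·z·e^{z/2})² > 0, then π(e^z)² < (e^{z+1}/z)·π(e^{z−1}), i.e., Ramanujan's inequality holds at x = e^z. -/
open scoped Classical

/-- If `|π(y) − li(y)| < a√y log y` on `[e^{z−1}, e^z]` with `a > 0`, `z > 1`, and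
`(e^{z+1}/z)·li(e^{z−1}) − (a(z−1)/z)·e^{(3z+1)/2} − (li(e^z) + a z e^{z/2})² > 0`,
then Ramanujan's inequality `π(e^z)² < (e^{z+1}/z)·π(e^{z−1})` holds. -/
theorem ramanujan_from_li_bound (a z : ℝ) (ha : 0 < a) (hz : 1 < z)
    (hπ : ∀ y ∈ Set.Icc (Real.exp (z - 1)) (Real.exp z),
      |primePi y - li y| < a * Real.sqrt y * Real.log y)
    (hfg : 0 < Real.exp (z + 1) / z * li (Real.exp (z - 1)) -
        a * (z - 1) / z * Real.exp ((3 * z + 1) / 2) -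
        (li (Real.exp z) + a * z * Real.exp (z / 2)) ^ 2) :
    primePi (Real.exp z) ^ 2 < Real.exp (z + 1) / z * primePi (Real.exp (z - 1)) := by

  have hz0 : 0 < z := by linarith
  have hπ0 : 0 ≤ primePi (Real.exp z) := by
    unfold primePi
    apply Finset.sum_nonneg
    intro p _
    split_ifs <;> norm_num
  have h1 : primePi (Real.exp z) - li (Real.exp z) < a * z * Real.exp (z / 2) := by
    have := hπ (Real.exp z) ⟨Real.exp_le_exp.mpr (by linarith), le_refl _⟩
    have hs : Real.sqrt (Real.exp z) = Real.exp (z / 2) := by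
      rw [← Real.exp_half]
    rw [hs, Real.log_exp] at this
    calc primePi (Real.exp z) - li (Real.exp z)
        ≤ |primePi (Real.exp z) - li (Real.exp z)| := le_abs_self _
      _ < a * Real.exp (z / 2) * z := this
      _ = a * z * Real.exp (z / 2) := by ring
  have h2 : li (Real.exp (z - 1)) - primePi (Real.exp (z - 1)) <
      a * (z - 1) * Real.exp ((z - 1) / 2) := by
    have := hπ (Real.exp (z - 1)) ⟨le_refl _, Real.exp_le_exp.mpr (by linarith)⟩
    have hs : Real.sqrt (Real.exp (z - 1)) = Real.exp ((z - 1) / 2) := by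
      rw [← Real.exp_half]
    rw [hs, Real.log_exp] at this
    calc li (Real.exp (z - 1)) - primePi (Real.exp (z - 1))
        ≤ |primePi (Real.exp (z - 1)) - li (Real.exp (z - 1))| := by
          rw [abs_sub_comm]; exact le_abs_self _
      _ < a * Real.exp ((z - 1) / 2) * (z - 1) := this
      _ = a * (z - 1) * Real.exp ((z - 1) / 2) := by ring
  set B := li (Real.exp z) + a * z * Real.exp (z / 2) with hB
  have hπB : primePi (Real.exp z) < B := by rw [hB]; linarith
  have hsq : primePi (Real.exp z) ^ 2 ≤ B ^ 2 := by
    have hB0 : 0 ≤ B := le_of_lt (lt_of_le_of_lt hπ0 hπB)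
    nlinarith
  have hc : Real.exp (z + 1) / z > 0 := div_pos (Real.exp_pos _) hz0
  have hkey : Real.exp (z + 1) / z * (Real.exp ((z - 1) / 2)) = Real.exp ((3 * z + 1) / 2) / z := by
    rw [div_mul_eq_mul_div, ← Real.exp_add]
    ring_nf
  have h3 : Real.exp (z + 1) / z * primePi (Real.exp (z - 1)) >
      Real.exp (z + 1) / z * li (Real.exp (z - 1)) -
        a * (z - 1) / z * Real.exp ((3 * z + 1) / 2) := by
    have h5 : Real.exp (z + 1) * Real.exp ((z - 1) / 2) = Real.exp ((3 * z + 1) / 2) := by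
      rw [← Real.exp_add]; ring_nf
    have h4 : Real.exp (z + 1) / z * (a * (z - 1) * Real.exp ((z - 1) / 2)) =
        a * (z - 1) / z * Real.exp ((3 * z + 1) / 2) := by
      rw [← h5]; ring
    have := mul_lt_mul_of_pos_left h2 hc
    rw [mul_sub, h4] at this
    linarith
  calc primePi (Real.exp z) ^ 2 ≤ B ^ 2 := hsq
    _ < Real.exp (z + 1) / z * primePi (Real.exp (z - 1)) := by nlinarith
end
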